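/- (Non-validity of 4 for non-rigid constants) For an agent-referring constant a, the schema K_a p → K_a K_a p is not valid on the class of transitive term-modal frames: there exist a transitive term-modal model M (i.e., R(α) transitive for every agent α), a world w, and a valuation v such that M, w ⊨_v K_a p but M, w ⊭_v K_a K_a p. -/

import Mathlib

/-- The two sorts: agents and objects. -/
inductive Srt : Type | agt | obj
deriving DecidableEq

/-- Variables, tagged with a sort. -/
abbrev Var : Type := Srt × ℕ

/-- Terms: variables and (non-rigid) constants, each tagged with a sort. -/
inductive Tm : Type
  | var : Var → Tm
  | con : Var → Tm
deriving DecidableEq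

/-- The sort of a term. -/
def Tm.srt : Tm → Srt
  | .var x => x.1
  | .con c => c.1

/-- Formulas of the two-sorted term-modal language: atomic relations,
equality, negation, implication, universal quantification, and modal
operators `K t` indexed by terms (agent-referring terms in wffs). -/
inductive Fml : Type
  | rel : ℕ → List Tm → Fml
  | eq : Tm → Tm → Fml
  | neg : Fml → Fml
  | imp : Fml → Fml → Fml
  | all : Var → Fml → Fml
  | K : Tm → Fml → Fml

/-- A term-modal frame: worlds, a two-sorted (constant) domain of agents `DA`
and objects `DO`, and an accessibility relation for each agent. -/
structure TMFrame : Type 1 where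
  W : Type
  DA : Type
  DO : Type
  wne : Nonempty W
  ane : Nonempty DA
  one : Nonempty DO
  R : DA → W → W → Prop

/-- The full (disjoint-union) domain of a frame. -/
def TMFrame.D (F : TMFrame) : Type := F.DA ⊕ F.DO

/-- The sort of a domain element. -/
def sortOf {F : TMFrame} : F.D → Srt
  | .inl _ => .agt
  | .inr _ => .obj

/-- A model based on a frame: an interpretation of relation symbols and of
(non-rigid) constants, the latter respecting sorts. -/
structure TMModel (F : TMFrame) where
  relI : ℕ → F.W → List F.D → Prop
  conI : Var → F.W → F.D
  conSorted : ∀ c w, sortOf (conI c w) = c.1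

/-- A valuation: a sort-respecting assignment of domain elements to variables. -/
def Val (F : TMFrame) : Type := {v : Var → F.D // ∀ x, sortOf (v x) = x.1}

/-- Extension of a term at a world under a valuation (variables are rigid,
constants are not). -/
def ext {F : TMFrame} (M : TMModel F) (v : Val F) (w : F.W) : Tm → F.D
  | .var x => v.1 x
  | .con c => M.conI c w

/-- `v'` is an x-variant of `v`: they agree on all variables except possibly x. -/
def XVar {F : TMFrame} (v v' : Val F) (x : Var) : Prop :=
  ∀ z : Var, z ≠ x → v.1 z = v'.1 z

/-- Kripke-style truth at a world of a model under a valuation. -/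
def sat {F : TMFrame} (M : TMModel F) (v : Val F) (w : F.W) : Fml → Prop
  | .rel p ts => M.relI p w (ts.map (ext M v w))
  | .eq t u => ext M v w t = ext M v w u
  | .neg φ => ¬ sat M v w φ
  | .imp φ ψ => sat M v w φ → sat M v w ψ
  | .all x φ => ∀ v' : Val F, XVar v v' x → sat M v' w φ
  | .K t φ => ∀ (a : F.DA) (w' : F.W),
      ext M v w t = Sum.inl a → F.R a w w' → sat M v w' φ

/-- Non-validity of 4 for non-rigid constants: for any
agent-referring constant a and atomic p, there are a term-modal model all of
whose accessibility relations are transitive, a world w, and a valuation v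
such that K_a p holds at w but K_a K_a p does not. -/
theorem four_not_valid_for_nonrigid_constants (a p : ℕ) :
    ∃ (F : TMFrame) (M : TMModel F) (w : F.W) (v : Val F),
      (∀ α : F.DA, ∀ u u' u'' : F.W, F.R α u u' → F.R α u' u'' → F.R α u u'') ∧
      sat M v w (Fml.K (Tm.con (Srt.agt, a)) (Fml.rel p [])) ∧
      ¬ sat M v w (Fml.K (Tm.con (Srt.agt, a))
          (Fml.K (Tm.con (Srt.agt, a)) (Fml.rel p []))) := by
  classical
  refine ⟨⟨Fin 3, Bool, Unit, ⟨0⟩, ⟨false⟩, ⟨()⟩,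
    fun α u u' => (α = false ∧ u = 0 ∧ u' = 1) ∨ (α = true ∧ u = 1 ∧ u' = 2)⟩,
    ⟨fun _ w _ => w ≠ 2,
     fun c w => match c.1 with
       | Srt.agt => Sum.inl (decide (w = 1))
       | Srt.obj => Sum.inr (),
     by intro c w; rcases c with ⟨s, n⟩; cases s <;> rfl⟩,
    0,
    ⟨fun x => match x.1 with
       | Srt.agt => Sum.inl false
       | Srt.obj => Sum.inr (),
     by intro x; rcases x with ⟨s, n⟩; cases s <;> rfl⟩,
    ?_, ?_, ?_⟩
  · rintro α u u' u'' (⟨rfl, rfl, rfl⟩ | ⟨rfl, rfl, rfl⟩) (⟨h, h1, h2⟩ | ⟨h, h1, h2⟩) <;> simp_all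
  · rintro α w' hα (⟨hf, _, rfl⟩ | ⟨ht, h1, rfl⟩)
    · simp [sat]
    · simp only [ext] at hα
      rw [ht] at hα
      simp at hα
      exact absurd h1 (by decide)
  · intro h
    have h1 := h false 1 (by simp [ext]; rfl) (Or.inl ⟨rfl, rfl, rfl⟩)
    have h2 := h1 true 2 (by simp [ext]; rfl) (Or.inr ⟨rfl, rfl, rfl⟩)
    simp [sat] at h2
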